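/- Let A = (a₁,a₂) and B = (b₁,b₂) be real 2×2 matrices and T = (A;B) the corresponding 2×2×2 tensor. Then rank_ℝ(T) ≤ 2 if and only if at least one of the following holds: (1) αA + βB = 0 for some (α,β) ≠ (0,0); (2) α(a₁,b₁) + β(a₂,b₂) = 0 for some (α,β) ≠ (0,0); (3) Δ(A;B) = 0 and det(a₁,b₁) + det(a₂,b₂) = 0; (4) Δ(A;B) > 0. -/

import Mathlib

open Matrix BigOperators

/-- Cayley hyperdeterminant (up to sign) of a 2×2×2 tensor given by matrix slices A, B. -/
noncomputable def Delta {F : Type*} [Field F] (A B : Matrix (Fin 2) (Fin 2) F) : F :=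
  ((A + B).det - (A - B).det) ^ 2 / 4 - 4 * A.det * B.det

/-- Rank of a 2×2×2 tensor, given as a pair of 2×2 matrix slices. -/
noncomputable def trank3 {F : Type*} [Field F] (T : Fin 2 → Matrix (Fin 2) (Fin 2) F) : ℕ :=
  sInf {r | ∃ u v w : Fin r → Fin 2 → F, ∀ k i j, T k i j = ∑ s, u s k * v s i * w s j}

/-- Rank of a 2×2×2×2 tensor, given as a 2×2 array of 2×2 matrix slices. -/
noncomputable def trank4 {F : Type*} [Field F] (T : Fin 2 → Fin 2 → Matrix (Fin 2) (Fin 2) F) : ℕ :=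
  sInf {r | ∃ u v w z : Fin r → Fin 2 → F,
    ∀ k l i j, T k l i j = ∑ s, u s k * v s l * w s i * z s j}

/-- The 2×2 matrix with columns u and v. -/
def col2 {F : Type*} [Field F] (u v : Fin 2 → F) : Matrix (Fin 2) (Fin 2) F :=
  Matrix.of fun i j => ![u, v] j i

/-- decomposability as a sum of ≤ 2 rank-one terms -/
def Decomp (A B : Matrix (Fin 2) (Fin 2) ℝ) : Prop :=
  ∃ u v w : Fin 2 → Fin 2 → ℝ,
    ∀ k i j, (![A, B] : Fin 2 → Matrix (Fin 2) (Fin 2) ℝ) k i j = ∑ s, u s k * v s i * w s j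

lemma trank3_le_two_iff (A B : Matrix (Fin 2) (Fin 2) ℝ) :
    trank3 ![A, B] ≤ 2 ↔ Decomp A B := by
  constructor
  · intro h
    have mem4 : (4 : ℕ) ∈ {r | ∃ u v w : Fin r → Fin 2 → ℝ,
        ∀ k i j, (![A, B] : Fin 2 → Matrix (Fin 2) (Fin 2) ℝ) k i j
          = ∑ s, u s k * v s i * w s j} := by
      refine ⟨![![1,0],![1,0],![0,1],![0,1]],
        ![fun i => (![A,B] : Fin 2 → Matrix (Fin 2) (Fin 2) ℝ) 0 i 0,
          fun i => (![A,B] : Fin 2 → Matrix (Fin 2) (Fin 2) ℝ) 0 i 1,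
          fun i => (![A,B] : Fin 2 → Matrix (Fin 2) (Fin 2) ℝ) 1 i 0,
          fun i => (![A,B] : Fin 2 → Matrix (Fin 2) (Fin 2) ℝ) 1 i 1],
        ![![1,0],![0,1],![1,0],![0,1]], ?_⟩
      intro k i j
      fin_cases k <;> fin_cases j <;> simp only [Fin.mk_zero, Fin.mk_one] <;>
        simp [Fin.sum_univ_four, Matrix.vecHead, Matrix.vecTail]
    have hne : {r | ∃ u v w : Fin r → Fin 2 → ℝ,
        ∀ k i j, (![A, B] : Fin 2 → Matrix (Fin 2) (Fin 2) ℝ) k i j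
          = ∑ s, u s k * v s i * w s j}.Nonempty := ⟨4, mem4⟩
    have hmem := Nat.sInf_mem hne
    rw [trank3] at h
    obtain ⟨r, hrS, hr2⟩ : ∃ r ∈ {r | ∃ u v w : Fin r → Fin 2 → ℝ,
        ∀ k i j, (![A, B] : Fin 2 → Matrix (Fin 2) (Fin 2) ℝ) k i j
          = ∑ s, u s k * v s i * w s j}, r ≤ 2 := ⟨_, hmem, h⟩
    interval_cases r
    · obtain ⟨u, v, w, hw⟩ := hrS
      refine ⟨0, 0, 0, fun k i j => ?_⟩
      have := hw k i j
      simpa [Fin.sum_univ_two] using this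
    · obtain ⟨u, v, w, hw⟩ := hrS
      refine ⟨![u 0, 0], ![v 0, 0], ![w 0, 0], fun k i j => ?_⟩
      have := hw k i j
      simp [Fin.sum_univ_two, Fin.sum_univ_one] at this ⊢
      simpa using this
    · exact hrS
  · intro ⟨u, v, w, hw⟩
    exact Nat.sInf_le ⟨u, v, w, hw⟩

/-- a 2×2 matrix with zero determinant is an outer product -/
lemma rank1_of_det_eq_zero (M : Matrix (Fin 2) (Fin 2) ℝ) (h : M.det = 0) :
    ∃ v w : Fin 2 → ℝ, ∀ i j, M i j = v i * w j := by
  rw [Matrix.det_fin_two] at h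
  by_cases h00 : M 0 0 = 0
  · by_cases h10 : M 1 0 = 0
    · refine ⟨fun i => M i 1, ![0, 1], fun i j => ?_⟩
      fin_cases i <;> fin_cases j <;> simp only [Fin.mk_zero, Fin.mk_one] <;> simp [h00, h10]
    · have h01 : M 0 1 = 0 := by
        have : M 0 1 * M 1 0 = 0 := by linear_combination -h + M 1 1 * h00
        rcases mul_eq_zero.mp this with h' | h'
        · exact h'
        · exact absurd h' h10
      refine ⟨fun i => M i 0, ![1, M 1 1 / M 1 0], fun i j => ?_⟩
      fin_cases i <;> fin_cases j <;> simp only [Fin.mk_zero, Fin.mk_one] <;> simp [h00, h01] <;> field_simp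
  · refine ⟨fun i => M i 0, ![1, M 0 1 / M 0 0], fun i j => ?_⟩
    fin_cases i <;> fin_cases j <;> simp only [Fin.mk_zero, Fin.mk_one] <;> simp
    all_goals field_simp
    all_goals (first | linear_combination -h | linear_combination 2*h | linear_combination h)

lemma delta_entries (A B : Matrix (Fin 2) (Fin 2) ℝ) :
    Delta A B = (A 0 0 * B 1 1 + B 0 0 * A 1 1 - A 0 1 * B 1 0 - B 0 1 * A 1 0) ^ 2
      - 4 * (A 0 0 * A 1 1 - A 0 1 * A 1 0) * (B 0 0 * B 1 1 - B 0 1 * B 1 0) := by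
  simp only [Delta, Matrix.det_fin_two, Matrix.add_apply, Matrix.sub_apply]
  ring

lemma decomp_swap (A B : Matrix (Fin 2) (Fin 2) ℝ) (h : Decomp A B) : Decomp B A := by
  obtain ⟨u, v, w, hw⟩ := h
  refine ⟨fun s => ![u s 1, u s 0], v, w, fun k i j => ?_⟩
  fin_cases k
  · simpa using hw 1 i j
  · simpa using hw 0 i j

lemma decomp_of_smul (A B : Matrix (Fin 2) (Fin 2) ℝ) (γ : ℝ) (h : ∀ i j, A i j = γ * B i j) :
    Decomp A B := by
  refine ⟨![![γ, 1], ![γ, 1]], ![fun i => B i 0, fun i => B i 1], ![![1, 0], ![0, 1]],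
    fun k i j => ?_⟩
  fin_cases k <;> fin_cases j <;>
    simp only [Fin.mk_zero, Fin.mk_one] <;>
    simp [Fin.sum_univ_two, h]

lemma decomp_of_rank1s (A B : Matrix (Fin 2) (Fin 2) ℝ) (hA : A.det = 0) (hB : B.det = 0) :
    Decomp A B := by
  obtain ⟨vA, wA, hvA⟩ := rank1_of_det_eq_zero A hA
  obtain ⟨vB, wB, hvB⟩ := rank1_of_det_eq_zero B hB
  refine ⟨![![1, 0], ![0, 1]], ![vA, vB], ![wA, wB], fun k i j => ?_⟩
  fin_cases k <;>
    simp [Fin.sum_univ_two, hvA, hvB]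

lemma delta_m (A B : Matrix (Fin 2) (Fin 2) ℝ) :
    Delta A B = (A 0 0 * B 1 1 + B 0 0 * A 1 1 - A 0 1 * B 1 0 - B 0 1 * A 1 0) ^ 2
      - 4 * A.det * B.det := by
  simp only [Delta, Matrix.det_fin_two, Matrix.add_apply, Matrix.sub_apply]
  ring

lemma det_pencil (A B : Matrix (Fin 2) (Fin 2) ℝ) (l : ℝ) :
    (A + l • B).det = A.det + l * (A 0 0 * B 1 1 + B 0 0 * A 1 1 - A 0 1 * B 1 0 - B 0 1 * A 1 0)
      + l ^ 2 * B.det := by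
  simp only [Matrix.det_fin_two, Matrix.add_apply, Matrix.smul_apply, smul_eq_mul]
  ring

lemma decomp_of_delta_pos (A B : Matrix (Fin 2) (Fin 2) ℝ) (hB : B.det ≠ 0)
    (hΔ : 0 < Delta A B) : Decomp A B := by
  set m := A 0 0 * B 1 1 + B 0 0 * A 1 1 - A 0 1 * B 1 0 - B 0 1 * A 1 0 with hmdef
  have hs2 : Real.sqrt (Delta A B) ^ 2 = m ^ 2 - 4 * A.det * B.det := by
    rw [Real.sq_sqrt hΔ.le, delta_m]
  set s := Real.sqrt (Delta A B) with hsdef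
  have hspos : 0 < s := Real.sqrt_pos.mpr hΔ
  set l1 := (-m + s) / (2 * B.det) with hl1
  set l2 := (-m - s) / (2 * B.det) with hl2
  have hdiff : l1 - l2 = s / B.det := by rw [hl1, hl2]; field_simp; ring
  have hdne : l1 - l2 ≠ 0 := by rw [hdiff]; exact div_ne_zero (ne_of_gt hspos) hB
  set p := (l1 - l2)⁻¹ with hpdef
  have hp : (l1 - l2) * p = 1 := by rw [hpdef]; exact mul_inv_cancel₀ hdne
  have h1 : (A + l1 • B).det = 0 := by
    rw [det_pencil, ← hmdef, hl1]
    field_simp [hB]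
    linear_combination hs2
  have h2 : (A + l2 • B).det = 0 := by
    rw [det_pencil, ← hmdef, hl2]
    field_simp [hB]
    linear_combination hs2
  obtain ⟨v1, w1, hM1⟩ := rank1_of_det_eq_zero _ h1
  obtain ⟨v2, w2, hM2⟩ := rank1_of_det_eq_zero _ h2
  have e1 : ∀ i j, A i j + l1 * B i j = v1 i * w1 j := by
    intro i j; have := hM1 i j; simpa [Matrix.add_apply, Matrix.smul_apply] using this
  have e2 : ∀ i j, A i j + l2 * B i j = v2 i * w2 j := by
    intro i j; have := hM2 i j; simpa [Matrix.add_apply, Matrix.smul_apply] using this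
  refine ⟨![![-l2 * p, p], ![l1 * p, -p]], ![v1, v2], ![w1, w2], fun k i j => ?_⟩
  fin_cases k <;> simp only [Fin.mk_zero, Fin.mk_one] <;> simp [Fin.sum_univ_two]
  · linear_combination (-l2 * p) * e1 i j + (l1 * p) * e2 i j - A i j * hp
  · linear_combination p * e1 i j - p * e2 i j - B i j * hp

lemma kernel_lemma (B : Matrix (Fin 2) (Fin 2) ℝ) (hB : B.det ≠ 0) (v w : Fin 2 → ℝ)
    (hm : v 0 * w 0 * B 1 1 - v 0 * w 1 * B 1 0 - v 1 * w 0 * B 0 1 + v 1 * w 1 * B 0 0 = 0)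
    (hn : v 0 * w 0 * B 1 0 + v 0 * w 1 * B 1 1 - v 1 * w 0 * B 0 0 - v 1 * w 1 * B 0 1 = 0) :
    ∀ i j, v i * w j = 0 := by
  have hB' : B 0 0 * B 1 1 - B 0 1 * B 1 0 ≠ 0 := by rwa [Matrix.det_fin_two] at hB
  have key : ∀ i, (B 0 0 * B 1 1 - B 0 1 * B 1 0) * ((w 0 ^ 2 + w 1 ^ 2) * v i) = 0 := by
    intro i
    fin_cases i <;> simp only [Fin.mk_zero, Fin.mk_one]
    · linear_combination (w 0 * B 0 0 + w 1 * B 0 1) * hm - (w 0 * B 0 1 - w 1 * B 0 0) * hn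
    · linear_combination (w 0 * B 1 0 + w 1 * B 1 1) * hm - (w 0 * B 1 1 - w 1 * B 1 0) * hn
  have hv : ∀ i, (w 0 ^ 2 + w 1 ^ 2) * v i = 0 := by
    intro i
    rcases mul_eq_zero.mp (key i) with h | h
    · exact absurd h hB'
    · exact h
  intro i j
  rcases mul_eq_zero.mp (hv i) with h | h
  · have h0 : w 0 = 0 := by nlinarith [sq_nonneg (w 0), sq_nonneg (w 1)]
    have h1 : w 1 = 0 := by nlinarith [sq_nonneg (w 0), sq_nonneg (w 1)]
    have hwj : w j = 0 := by fin_cases j <;> simp only [Fin.mk_zero, Fin.mk_one] <;> simp [h0, h1]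
    rw [hwj, mul_zero]
  · rw [h, zero_mul]

lemma decomp_of_delta_zero (A B : Matrix (Fin 2) (Fin 2) ℝ) (hB : B.det ≠ 0)
    (hΔ : Delta A B = 0)
    (hn : A 0 0 * B 1 0 - B 0 0 * A 1 0 + (A 0 1 * B 1 1 - B 0 1 * A 1 1) = 0) :
    Decomp A B := by
  have hB' : B 0 0 * B 1 1 - B 0 1 * B 1 0 ≠ 0 := by rwa [Matrix.det_fin_two] at hB
  rw [delta_entries] at hΔ
  set M : Matrix (Fin 2) (Fin 2) ℝ := Matrix.of fun i j =>
    2 * (B 0 0 * B 1 1 - B 0 1 * B 1 0) * A i j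
      - (A 0 0 * B 1 1 + B 0 0 * A 1 1 - A 0 1 * B 1 0 - B 0 1 * A 1 0) * B i j with hMdef
  have hMapp : ∀ i j, M i j = 2 * (B 0 0 * B 1 1 - B 0 1 * B 1 0) * A i j
      - (A 0 0 * B 1 1 + B 0 0 * A 1 1 - A 0 1 * B 1 0 - B 0 1 * A 1 0) * B i j := by
    intro i j; rw [hMdef]; rfl
  have hdM : M.det = 0 := by
    rw [Matrix.det_fin_two, hMapp, hMapp, hMapp, hMapp]
    linear_combination (-(B 0 0 * B 1 1 - B 0 1 * B 1 0)) * hΔ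
  obtain ⟨v, w, hvw⟩ := rank1_of_det_eq_zero M hdM
  have hM : ∀ i j, v i * w j = 2 * (B 0 0 * B 1 1 - B 0 1 * B 1 0) * A i j
      - (A 0 0 * B 1 1 + B 0 0 * A 1 1 - A 0 1 * B 1 0 - B 0 1 * A 1 0) * B i j := by
    intro i j; rw [← hvw i j, hMapp]
  have hmh : v 0 * w 0 * B 1 1 - v 0 * w 1 * B 1 0 - v 1 * w 0 * B 0 1 + v 1 * w 1 * B 0 0 = 0 := by
    rw [hM 0 0, hM 0 1, hM 1 0, hM 1 1]; ring
  have hnh : v 0 * w 0 * B 1 0 + v 0 * w 1 * B 1 1 - v 1 * w 0 * B 0 0 - v 1 * w 1 * B 0 1 = 0 := by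
    rw [hM 0 0, hM 0 1, hM 1 0, hM 1 1]
    linear_combination (2 * (B 0 0 * B 1 1 - B 0 1 * B 1 0)) * hn
  have hz := kernel_lemma B hB v w hmh hnh
  apply decomp_of_smul A B
    ((A 0 0 * B 1 1 + B 0 0 * A 1 1 - A 0 1 * B 1 0 - B 0 1 * A 1 0) / (2 * (B 0 0 * B 1 1 - B 0 1 * B 1 0)))
  intro i j
  have h0 := hM i j
  rw [hz i j] at h0
  have h2 : (2 * (B 0 0 * B 1 1 - B 0 1 * B 1 0)) ≠ 0 := mul_ne_zero two_ne_zero hB'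
  rw [div_mul_eq_mul_div, eq_div_iff h2]
  linear_combination -h0

lemma delta_comm (A B : Matrix (Fin 2) (Fin 2) ℝ) : Delta B A = Delta A B := by
  rw [delta_entries, delta_entries]; ring

theorem stmt7 (a₁ a₂ b₁ b₂ : Fin 2 → ℝ) :
    trank3 ![col2 a₁ a₂, col2 b₁ b₂] ≤ 2 ↔
      (∃ α β : ℝ, (α ≠ 0 ∨ β ≠ 0) ∧ α • col2 a₁ a₂ + β • col2 b₁ b₂ = 0) ∨
      (∃ α β : ℝ, (α ≠ 0 ∨ β ≠ 0) ∧ α • col2 a₁ b₁ + β • col2 a₂ b₂ = 0) ∨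
      (Delta (col2 a₁ a₂) (col2 b₁ b₂) = 0 ∧ (col2 a₁ b₁).det + (col2 a₂ b₂).det = 0) ∨
      0 < Delta (col2 a₁ a₂) (col2 b₁ b₂) := by
  set A := col2 a₁ a₂ with hAdef
  set B := col2 b₁ b₂ with hBdef
  have cA0 : ∀ i, A i 0 = a₁ i := fun i => by rw [hAdef]; simp [col2]
  have cA1 : ∀ i, A i 1 = a₂ i := fun i => by rw [hAdef]; simp [col2]
  have cB0 : ∀ i, B i 0 = b₁ i := fun i => by rw [hBdef]; simp [col2]
  have cB1 : ∀ i, B i 1 = b₂ i := fun i => by rw [hBdef]; simp [col2]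
  have hndet : (col2 a₁ b₁).det + (col2 a₂ b₂).det
      = A 0 0 * B 1 0 - B 0 0 * A 1 0 + (A 0 1 * B 1 1 - B 0 1 * A 1 1) := by
    rw [Matrix.det_fin_two, Matrix.det_fin_two, cA0, cA0, cA1, cA1, cB0, cB0, cB1, cB1]
    simp [col2]
    try ring
  rw [trank3_le_two_iff]
  constructor
  · rintro ⟨u, v, w, hw⟩
    have hA : ∀ i j, A i j = u 0 0 * v 0 i * w 0 j + u 1 0 * v 1 i * w 1 j := by
      intro i j; simpa [Fin.sum_univ_two] using hw 0 i j
    have hB : ∀ i j, B i j = u 0 1 * v 0 i * w 0 j + u 1 1 * v 1 i * w 1 j := by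
      intro i j; simpa [Fin.sum_univ_two] using hw 1 i j
    set dU := u 0 0 * u 1 1 - u 0 1 * u 1 0 with hdUdef
    set dv := v 0 0 * v 1 1 - v 0 1 * v 1 0 with hdvdef
    set dw := w 0 0 * w 1 1 - w 0 1 * w 1 0 with hdwdef
    have hDelta : Delta A B = (dU * dv * dw) ^ 2 := by
      rw [delta_entries, hA 0 0, hA 0 1, hA 1 0, hA 1 1, hB 0 0, hB 0 1, hB 1 0, hB 1 1,
        hdUdef, hdvdef, hdwdef]
      ring
    have hnval : (col2 a₁ b₁).det + (col2 a₂ b₂).det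
        = dU * dv * (w 0 0 * w 1 0 + w 0 1 * w 1 1) := by
      rw [hndet, hA 0 0, hA 0 1, hA 1 0, hA 1 1, hB 0 0, hB 0 1, hB 1 0, hB 1 1,
        hdUdef, hdvdef]
      ring
    by_cases hdU : dU = 0
    · -- condition (1)
      left
      by_cases h1 : u 1 0 = 0 ∧ u 1 1 = 0
      · by_cases h0 : u 0 0 = 0 ∧ u 0 1 = 0
        · refine ⟨1, 0, Or.inl one_ne_zero, ?_⟩
          ext i j
          simp [hA i j, hB i j, h0.1, h0.2, h1.1, h1.2]
        · refine ⟨u 0 1, -(u 0 0), ?_, ?_⟩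
          · rcases not_and_or.mp h0 with h | h
            · right; simpa using h
            · left; exact h
          · ext i j
            simp only [Matrix.add_apply, Matrix.smul_apply, Matrix.zero_apply, smul_eq_mul]
            linear_combination u 0 1 * hA i j - u 0 0 * hB i j - (v 1 i * w 1 j) * hdU
      · refine ⟨u 1 1, -(u 1 0), ?_, ?_⟩
        · rcases not_and_or.mp h1 with h | h
          · right; simpa using h
          · left; exact h
        · ext i j
          simp only [Matrix.add_apply, Matrix.smul_apply, Matrix.zero_apply, smul_eq_mul]
          linear_combination u 1 1 * hA i j - u 1 0 * hB i j + (v 0 i * w 0 j) * hdU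
    · by_cases hdw : dw = 0
      · -- condition (2)
        right; left
        have ca : ∀ i j, (col2 a₁ b₁) i j = ![A i 0, B i 0] j := by
          intro i j; fin_cases j <;> simp only [Fin.mk_zero, Fin.mk_one] <;>
            simp [col2, cA0, cB0]
        have cb : ∀ i j, (col2 a₂ b₂) i j = ![A i 1, B i 1] j := by
          intro i j; fin_cases j <;> simp only [Fin.mk_zero, Fin.mk_one] <;>
            simp [col2, cA1, cB1]
        by_cases h1 : w 1 0 = 0 ∧ w 1 1 = 0
        · by_cases h0 : w 0 0 = 0 ∧ w 0 1 = 0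
          · refine ⟨1, 0, Or.inl one_ne_zero, ?_⟩
            ext i j
            simp only [Matrix.add_apply, Matrix.smul_apply, Matrix.zero_apply, smul_eq_mul,
              ca, cb]
            fin_cases j <;> simp only [Fin.mk_zero, Fin.mk_one] <;>
              simp [hA i, hB i, h0.1, h0.2, h1.1, h1.2]
          · refine ⟨w 0 1, -(w 0 0), ?_, ?_⟩
            · rcases not_and_or.mp h0 with h | h
              · right; simpa using h
              · left; exact h
            · ext i j
              simp only [Matrix.add_apply, Matrix.smul_apply, Matrix.zero_apply, smul_eq_mul,
                ca, cb]
              fin_cases j <;> simp only [Fin.mk_zero, Fin.mk_one] <;> simp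
              · linear_combination w 0 1 * hA i 0 - w 0 0 * hA i 1 - (u 1 0 * v 1 i) * hdw
              · linear_combination w 0 1 * hB i 0 - w 0 0 * hB i 1 - (u 1 1 * v 1 i) * hdw
        · refine ⟨w 1 1, -(w 1 0), ?_, ?_⟩
          · rcases not_and_or.mp h1 with h | h
            · right; simpa using h
            · left; exact h
          · ext i j
            simp only [Matrix.add_apply, Matrix.smul_apply, Matrix.zero_apply, smul_eq_mul,
              ca, cb]
            fin_cases j <;> simp only [Fin.mk_zero, Fin.mk_one] <;> simp
            · linear_combination w 1 1 * hA i 0 - w 1 0 * hA i 1 + (u 0 0 * v 0 i) * hdw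
            · linear_combination w 1 1 * hB i 0 - w 1 0 * hB i 1 + (u 0 1 * v 0 i) * hdw
      · by_cases hdv : dv = 0
        · -- condition (3)
          right; right; left
          constructor
          · rw [hDelta, hdv]; ring
          · rw [hnval, hdv]; ring
        · -- condition (4)
          right; right; right
          rw [hDelta]
          have h : dU * dv * dw ≠ 0 := mul_ne_zero (mul_ne_zero hdU hdv) hdw
          exact lt_of_le_of_ne (sq_nonneg _) (Ne.symm (pow_ne_zero 2 h))
  · rintro (⟨α, β, hαβ, h⟩ | ⟨α, β, hαβ, h⟩ | ⟨hΔ, hn⟩ | hΔ)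
    · -- condition (1)
      have hent : ∀ i j, α * A i j + β * B i j = 0 := by
        intro i j
        have := congrFun (congrFun h i) j
        simpa using this
      rcases hαβ with hα | hβ
      · apply decomp_of_smul A B (-β / α)
        intro i j
        field_simp
        linear_combination hent i j
      · apply decomp_swap
        apply decomp_of_smul B A (-α / β)
        intro i j
        field_simp
        linear_combination hent i j
    · -- condition (2)
      have hent : ∀ i j, α * (col2 a₁ b₁) i j + β * (col2 a₂ b₂) i j = 0 := by
        intro i j
        have := congrFun (congrFun h i) j
        simpa using this
      have he0 : ∀ i, α * a₁ i + β * a₂ i = 0 := by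
        intro i; have := hent i 0; simpa [col2] using this
      have he1 : ∀ i, α * b₁ i + β * b₂ i = 0 := by
        intro i; have := hent i 1; simpa [col2] using this
      rcases hαβ with hα | hβ
      · refine ⟨![![1, 0], ![0, 1]], ![a₂, b₂], ![![(-β / α), 1], ![(-β / α), 1]],
          fun k i j => ?_⟩
        fin_cases k <;> fin_cases j <;> simp only [Fin.mk_zero, Fin.mk_one] <;>
          simp [Fin.sum_univ_two, cA0, cA1, cB0, cB1]
        · field_simp; linear_combination he0 i
        · field_simp; linear_combination he1 i
      · refine ⟨![![1, 0], ![0, 1]], ![a₁, b₁], ![![1, (-α / β)], ![1, (-α / β)]],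
          fun k i j => ?_⟩
        fin_cases k <;> fin_cases j <;> simp only [Fin.mk_zero, Fin.mk_one] <;>
          simp [Fin.sum_univ_two, cA0, cA1, cB0, cB1]
        · field_simp; linear_combination he0 i
        · field_simp; linear_combination he1 i
    · -- condition (3)
      rw [hndet] at hn
      by_cases hb : B.det = 0
      · by_cases ha : A.det = 0
        · exact decomp_of_rank1s A B ha hb
        · apply decomp_swap
          apply decomp_of_delta_zero B A ha
          · rw [delta_comm]; exact hΔ
          · linear_combination -hn
      · exact decomp_of_delta_zero A B hb hΔ hn
    · -- condition (4)
      by_cases hb : B.det = 0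
      · by_cases ha : A.det = 0
        · exact decomp_of_rank1s A B ha hb
        · apply decomp_swap
          apply decomp_of_delta_pos B A ha
          rw [delta_comm]; exact hΔ
      · exact decomp_of_delta_pos A B hb hΔ
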